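/- For every sample size m ≥ 1 and all data 0 < z_1 < … < z_m, the MDI prior for the Generalized Pareto distribution, corresponding to π(ξ) = e^{−ξ} for ξ ∈ ℝ, yields an improper posterior: the GP posterior normalizing constant C_m(e^{−ξ}; z) = +∞. -/

import Mathlib

open MeasureTheory Real Set
open scoped ENNReal Classical

/-- The inner integral over the scale `σ` of the Generalized Pareto posterior
integrand, for a fixed shape `ξ`, data `z` and prior `π(σ,ξ) ∝ π(ξ)/σ`:
`∫_{max(0, -ξ z_m)}^∞ σ^{-(m+1)} ∏_{i=1}^m (1 + ξ z_i/σ)^{-(1+1/ξ)} dσ`,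
with the Gumbel interpretation `σ^{-(m+1)} exp(-(Σ_i z_i)/σ)` when `ξ = 0`. -/
noncomputable def gpInner (m : ℕ) (z : Fin m → ℝ) (ξ : ℝ) : ℝ≥0∞ :=
  ∫⁻ σ in Set.Ioi (max 0 (-ξ * ⨆ i, z i)),
    ENNReal.ofReal
      (if ξ = 0 then σ ^ (-((m : ℝ) + 1)) * Real.exp (-(∑ i, z i) / σ)
       else σ ^ (-((m : ℝ) + 1)) * ∏ i, (1 + ξ * z i / σ) ^ (-(1 + 1 / ξ)))

/-- The Generalized Pareto posterior normalizing constant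
`C_m(π; z) = ∫_ℝ π(ξ) ∫_{max(0,-ξ z_m)}^∞ σ^{-(m+1)} ∏_i (1+ξ z_i/σ)^{-(1+1/ξ)} dσ dξ`. -/
noncomputable def gpC (m : ℕ) (z : Fin m → ℝ) (p : ℝ → ℝ) : ℝ≥0∞ :=
  ∫⁻ ξ : ℝ, ENNReal.ofReal (p ξ) * gpInner m z ξ

lemma exp_rpow_aux (m : ℕ) (t : ℝ) (ht : 1 ≤ t) :
    ((m : ℝ) + 1) ^ (-((m : ℝ) + 1)) ≤ Real.exp t * t ^ (-(m : ℝ)) := by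
  have ht0 : (0:ℝ) < t := lt_of_lt_of_le one_pos ht
  have hm1 : (0:ℝ) < (m:ℝ) + 1 := by positivity
  have h1 : (t / ((m:ℝ)+1)) ^ (((m:ℝ)+1)) ≤ Real.exp t := by
    have hs : t / ((m:ℝ)+1) ≤ Real.exp (t / ((m:ℝ)+1)) := by
      have := Real.add_one_le_exp (t / ((m:ℝ)+1))
      linarith
    calc (t / ((m:ℝ)+1)) ^ (((m:ℝ)+1))
        ≤ (Real.exp (t / ((m:ℝ)+1))) ^ (((m:ℝ)+1)) :=
          Real.rpow_le_rpow (by positivity) hs (by positivity)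
      _ = Real.exp t := by
          rw [← Real.exp_mul, div_mul_cancel₀ _ (ne_of_gt hm1)]
  have h2 : (t / ((m:ℝ)+1)) ^ (((m:ℝ)+1)) = t ^ (((m:ℝ)+1)) * ((m:ℝ)+1) ^ (-((m:ℝ)+1)) := by
    rw [Real.div_rpow ht0.le hm1.le, Real.rpow_neg hm1.le, div_eq_mul_inv]
  have h3 : t ^ ((m:ℝ)) ≤ t ^ (((m:ℝ)+1)) :=
    Real.rpow_le_rpow_of_exponent_le ht (by linarith)
  have h4 : ((m:ℝ)+1) ^ (-((m:ℝ)+1)) * t ^ ((m:ℝ)) ≤ Real.exp t := by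
    calc ((m:ℝ)+1) ^ (-((m:ℝ)+1)) * t ^ ((m:ℝ))
        ≤ ((m:ℝ)+1) ^ (-((m:ℝ)+1)) * t ^ (((m:ℝ)+1)) := by
          apply mul_le_mul_of_nonneg_left h3 (by positivity)
      _ = (t / ((m:ℝ)+1)) ^ (((m:ℝ)+1)) := by rw [h2]; ring
      _ ≤ Real.exp t := h1
  have htm : (0:ℝ) < t ^ ((m:ℝ)) := Real.rpow_pos_of_pos ht0 _
  rw [Real.rpow_neg ht0.le, ← div_eq_mul_inv, le_div_iff₀ htm]
  exact h4

theorem gp_MDI_improper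
    (m : ℕ) (hm : 1 ≤ m) (z : Fin m → ℝ)
    (hzpos : ∀ i, 0 < z i) (hzmono : StrictMono z) :
    gpC m z (fun ξ => Real.exp (-ξ)) = ⊤ := by
  classical
  set M : ℝ := ⨆ i, z i with hMdef
  have hne : Nonempty (Fin m) := ⟨⟨0, hm⟩⟩
  have hzM : ∀ i, z i ≤ M := fun i => le_ciSup (Set.Finite.bddAbove (Set.finite_range z)) i
  have hM : 0 < M := lt_of_lt_of_le (hzpos ⟨0, hm⟩) (hzM _)
  set c : ℝ := ((m:ℝ)+1) ^ (-((m:ℝ)+1)) * ((2:ℝ) ^ (-((m:ℝ)+1)) * M ^ (-(m:ℝ))) with hcdef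
  have hcpos : 0 < c := by positivity
  have hpow : ∀ x : ℝ, 0 < x → x ^ (-((m:ℝ)+1)) * x = x ^ (-(m:ℝ)) := by
    intro x hx
    have h := Real.rpow_add_one hx.ne' (-((m:ℝ)+1))
    rw [show -((m:ℝ)+1) + 1 = -(m:ℝ) by ring] at h
    exact h.symm
  have key : ∀ ξ ∈ Iio (-1 : ℝ),
      ENNReal.ofReal c ≤ ENNReal.ofReal (Real.exp (-ξ)) * gpInner m z ξ := by
    intro ξ hξ
    simp only [mem_Iio] at hξ
    have hξ0 : ξ < 0 := by linarith
    have hξne : ξ ≠ 0 := ne_of_lt hξ0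
    set t : ℝ := -ξ with htdef
    have ht1 : 1 ≤ t := by rw [htdef]; linarith
    have ht0 : 0 < t := lt_of_lt_of_le one_pos ht1
    set a : ℝ := t * M with hadef
    have ha : 0 < a := mul_pos ht0 hM
    have hMa : ξ * M = -a := by rw [hadef, htdef]; ring
    have hmax : max 0 (-ξ * M) = a := by
      rw [show -ξ * M = a by rw [hadef, htdef]]
      exact max_eq_right ha.le
    have hinner : ENNReal.ofReal ((2*a) ^ (-((m:ℝ)+1))) * ENNReal.ofReal a ≤ gpInner m z ξ := by
      calc ENNReal.ofReal ((2*a) ^ (-((m:ℝ)+1))) * ENNReal.ofReal a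
          = ∫⁻ _ in Ioo a (2*a), ENNReal.ofReal ((2*a) ^ (-((m:ℝ)+1))) := by
            rw [setLIntegral_const, Real.volume_Ioo, show 2*a - a = a by ring]
        _ ≤ ∫⁻ σ in Ioo a (2*a),
              ENNReal.ofReal
                (if ξ = 0 then σ ^ (-((m : ℝ) + 1)) * Real.exp (-(∑ i, z i) / σ)
                 else σ ^ (-((m : ℝ) + 1)) * ∏ i, (1 + ξ * z i / σ) ^ (-(1 + 1 / ξ))) := by
            apply setLIntegral_mono' measurableSet_Ioo
            intro σ hσ
            rcases hσ with ⟨hσ1, hσ2⟩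
            have hσ0 : 0 < σ := lt_trans ha hσ1
            rw [if_neg hξne]
            apply ENNReal.ofReal_le_ofReal
            have hexp : -(1 + 1/ξ) ≤ 0 := by
              have hpos : (0:ℝ) < (ξ + 1)/ξ := div_pos_of_neg_of_neg (by linarith) hξ0
              have h11 : 1 + 1/ξ = (ξ + 1)/ξ := by field_simp
              rw [h11]; linarith
            have hprod : (1:ℝ) ≤ ∏ i, (1 + ξ * z i / σ) ^ (-(1 + 1 / ξ)) := by
              have hfac : ∀ i : Fin m, (1:ℝ) ≤ (1 + ξ * z i / σ) ^ (-(1 + 1 / ξ)) := by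
                intro i
                have h1 : ξ * M ≤ ξ * z i := mul_le_mul_of_nonpos_left (hzM i) hξ0.le
                have h2 : ξ * M / σ ≤ ξ * z i / σ := by gcongr
                have h3 : -1 < ξ * M / σ := by
                  rw [hMa, neg_div]
                  have : a / σ < 1 := (div_lt_one hσ0).mpr hσ1
                  linarith
                have hb0 : 0 < 1 + ξ * z i / σ := by linarith
                have hb1 : 1 + ξ * z i / σ ≤ 1 := by
                  have : ξ * z i / σ ≤ 0 :=
                    div_nonpos_of_nonpos_of_nonneg
                      (mul_nonpos_of_nonpos_of_nonneg hξ0.le (hzpos i).le) hσ0.le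
                  linarith
                exact Real.one_le_rpow_of_pos_of_le_one_of_nonpos hb0 hb1 hexp
              calc (1:ℝ) = ∏ _i : Fin m, (1:ℝ) := by simp
                _ ≤ ∏ i, (1 + ξ * z i / σ) ^ (-(1 + 1 / ξ)) :=
                    Finset.prod_le_prod (fun i _ => zero_le_one) (fun i _ => hfac i)
            calc (2*a) ^ (-((m:ℝ)+1))
                ≤ σ ^ (-((m:ℝ)+1)) :=
                  Real.rpow_le_rpow_of_nonpos hσ0 hσ2.le (neg_nonpos.mpr (by positivity))
              _ = σ ^ (-((m:ℝ)+1)) * 1 := (mul_one _).symm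
              _ ≤ σ ^ (-((m:ℝ)+1)) * ∏ i, (1 + ξ * z i / σ) ^ (-(1 + 1 / ξ)) :=
                  mul_le_mul_of_nonneg_left hprod (Real.rpow_nonneg hσ0.le _)
        _ ≤ ∫⁻ σ in Ioi (max 0 (-ξ * ⨆ i, z i)),
              ENNReal.ofReal
                (if ξ = 0 then σ ^ (-((m : ℝ) + 1)) * Real.exp (-(∑ i, z i) / σ)
                 else σ ^ (-((m : ℝ) + 1)) * ∏ i, (1 + ξ * z i / σ) ^ (-(1 + 1 / ξ))) := by
            apply lintegral_mono_set
            rw [← hMdef, hmax]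
            exact fun x hx => hx.1
        _ = gpInner m z ξ := rfl
    have hreal : c ≤ Real.exp (-ξ) * ((2*a) ^ (-((m:ℝ)+1)) * a) := by
      have hval : (2*a) ^ (-((m:ℝ)+1)) * a
          = (2:ℝ) ^ (-((m:ℝ)+1)) * (t ^ (-(m:ℝ)) * M ^ (-(m:ℝ))) := by
        rw [Real.mul_rpow (by norm_num) ha.le]
        rw [mul_assoc, hpow a ha, hadef, Real.mul_rpow ht0.le hM.le]
      rw [hval, show Real.exp (-ξ) = Real.exp t by rw [htdef]]
      have := mul_le_mul_of_nonneg_right (exp_rpow_aux m t ht1)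
        (show (0:ℝ) ≤ (2:ℝ) ^ (-((m:ℝ)+1)) * M ^ (-(m:ℝ)) by positivity)
      calc c = ((m:ℝ)+1) ^ (-((m:ℝ)+1)) * ((2:ℝ) ^ (-((m:ℝ)+1)) * M ^ (-(m:ℝ))) := hcdef
        _ ≤ Real.exp t * t ^ (-(m:ℝ)) * ((2:ℝ) ^ (-((m:ℝ)+1)) * M ^ (-(m:ℝ))) := this
        _ = Real.exp t * ((2:ℝ) ^ (-((m:ℝ)+1)) * (t ^ (-(m:ℝ)) * M ^ (-(m:ℝ)))) := by ring
    calc ENNReal.ofReal c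
        ≤ ENNReal.ofReal (Real.exp (-ξ) * ((2*a) ^ (-((m:ℝ)+1)) * a)) :=
          ENNReal.ofReal_le_ofReal hreal
      _ = ENNReal.ofReal (Real.exp (-ξ)) *
            (ENNReal.ofReal ((2*a) ^ (-((m:ℝ)+1))) * ENNReal.ofReal a) := by
          rw [ENNReal.ofReal_mul (Real.exp_nonneg _), ENNReal.ofReal_mul (by positivity)]
      _ ≤ ENNReal.ofReal (Real.exp (-ξ)) * gpInner m z ξ :=
          mul_le_mul_of_nonneg_left hinner zero_le
  have htop : (⊤:ℝ≥0∞) ≤ gpC m z fun ξ => Real.exp (-ξ) := by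
    calc (⊤:ℝ≥0∞) = ENNReal.ofReal c * volume (Iio (-1:ℝ)) := by
          rw [Real.volume_Iio, ENNReal.mul_top ((ENNReal.ofReal_pos.mpr hcpos).ne')]
      _ = ∫⁻ _ in Iio (-1:ℝ), ENNReal.ofReal c := (setLIntegral_const _ _).symm
      _ ≤ ∫⁻ ξ in Iio (-1:ℝ), ENNReal.ofReal (Real.exp (-ξ)) * gpInner m z ξ :=
          setLIntegral_mono' measurableSet_Iio key
      _ ≤ ∫⁻ ξ, ENNReal.ofReal (Real.exp (-ξ)) * gpInner m z ξ :=
          setLIntegral_le_lintegral _ _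
      _ = gpC m z fun ξ => Real.exp (-ξ) := rfl
  exact top_le_iff.mp htop
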